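/- (Index Decay.) Under the natural constraints, let 0 < β ≤ 1, 0 ≤ b ≤ 1, and T ≥ 2. Assume indexability in the form: the map m ↦ Vp m T b − Va m T b is monotone nondecreasing. If m_T is a real number satisfying Vp m_T T b = Va m_T T b (that is, m_T is the Whittle index of belief b for horizon T), then m_T > m₁(b) > 0, where m₁(b) is the Whittle index for horizon 1. -/
import Mathlib

noncomputable def V (β m p01p p11p p01a p11a : ℝ) : ℕ → ℝ → ℝ
  | 0, b => b
  | T + 1, b =>
      max (b + m + β * V β m p01p p11p p01a p11a T (b * p11p + (1 - b) * p01p))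
          (b + β * (b * V β m p01p p11p p01a p11a T p11a
                    + (1 - b) * V β m p01p p11p p01a p11a T p01a))

noncomputable def Vp (β m p01p p11p p01a p11a : ℝ) (T : ℕ) (b : ℝ) : ℝ :=
  b + m + β * V β m p01p p11p p01a p11a (T - 1) (b * p11p + (1 - b) * p01p)

noncomputable def Va (β m p01p p11p p01a p11a : ℝ) (T : ℕ) (b : ℝ) : ℝ :=
  b + β * (b * V β m p01p p11p p01a p11a (T - 1) p11a
           + (1 - b) * V β m p01p p11p p01a p11a (T - 1) p01a)

lemma V_lip (β m p01p p11p p01a p11a : ℝ) (hβ : 0 ≤ β)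
    (hp : p01p ≤ p11p) (ha : p01a ≤ p11a) :
    ∀ t : ℕ, ∀ x y : ℝ, x ≤ y →
      V β m p01p p11p p01a p11a t x + (y - x) ≤ V β m p01p p11p p01a p11a t y := by
  intro t
  induction t with
  | zero => intro x y h; simp [V]
  | succ s ih =>
    intro x y h
    simp only [V]
    have h1 : x * p11p + (1 - x) * p01p ≤ y * p11p + (1 - y) * p01p := by nlinarith
    have h2 := ih _ _ h1
    have h3 := ih p01a p11a ha
    have hA : (x + m + β * V β m p01p p11p p01a p11a s (x * p11p + (1 - x) * p01p)) + (y - x)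
        ≤ y + m + β * V β m p01p p11p p01a p11a s (y * p11p + (1 - y) * p01p) := by
      nlinarith
    have hB : (x + β * (x * V β m p01p p11p p01a p11a s p11a
                    + (1 - x) * V β m p01p p11p p01a p11a s p01a)) + (y - x)
        ≤ y + β * (y * V β m p01p p11p p01a p11a s p11a
                    + (1 - y) * V β m p01p p11p p01a p11a s p01a) := by
      nlinarith [mul_nonneg hβ (mul_nonneg (sub_nonneg.2 h)
        (by linarith : (0:ℝ) ≤ V β m p01p p11p p01a p11a s p11a
          - V β m p01p p11p p01a p11a s p01a))]
    calc max _ _ + (y - x) = max (_ + (y - x)) (_ + (y - x)) := (max_add_add_right _ _ _).symm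
    _ ≤ max _ _ := max_le_max hA hB

lemma V_strict (β m p01p p11p p01a p11a : ℝ) (hβ : 0 < β)
    (hp : p01p < p11p) (ha : p01a < p11a) :
    ∀ t : ℕ, ∀ x y : ℝ, x < y →
      V β m p01p p11p p01a p11a (t + 1) x + (y - x) < V β m p01p p11p p01a p11a (t + 1) y := by
  intro t x y h
  simp only [V]
  have h1 : x * p11p + (1 - x) * p01p < y * p11p + (1 - y) * p01p := by nlinarith
  have h2 := V_lip β m p01p p11p p01a p11a hβ.le hp.le ha.le t _ _ h1.le
  have h3 := V_lip β m p01p p11p p01a p11a hβ.le hp.le ha.le t p01a p11a ha.le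
  have hA : (x + m + β * V β m p01p p11p p01a p11a t (x * p11p + (1 - x) * p01p)) + (y - x)
      < y + m + β * V β m p01p p11p p01a p11a t (y * p11p + (1 - y) * p01p) := by
    nlinarith
  have hB : (x + β * (x * V β m p01p p11p p01a p11a t p11a
                  + (1 - x) * V β m p01p p11p p01a p11a t p01a)) + (y - x)
      < y + β * (y * V β m p01p p11p p01a p11a t p11a
                  + (1 - y) * V β m p01p p11p p01a p11a t p01a) := by
    nlinarith [mul_pos hβ (mul_pos (sub_pos.2 h)
      (by linarith : (0:ℝ) < V β m p01p p11p p01a p11a t p11a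
        - V β m p01p p11p p01a p11a t p01a))]
  calc max _ _ + (y - x) = max (_ + (y - x)) (_ + (y - x)) := (max_add_add_right _ _ _).symm
  _ < max _ _ := max_lt_max hA hB

lemma V_convex (β m p01p p11p p01a p11a : ℝ) (hβ : 0 ≤ β) :
    ∀ t : ℕ, ∀ x y c : ℝ, 0 ≤ c → c ≤ 1 →
      V β m p01p p11p p01a p11a t (c * y + (1 - c) * x)
        ≤ c * V β m p01p p11p p01a p11a t y + (1 - c) * V β m p01p p11p p01a p11a t x := by
  intro t
  induction t with
  | zero => intro x y c hc0 hc1; simp [V]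
  | succ s ih =>
    intro x y c hc0 hc1
    simp only [V]
    set z := c * y + (1 - c) * x with hz
    have hzp : z * p11p + (1 - z) * p01p
        = c * (y * p11p + (1 - y) * p01p) + (1 - c) * (x * p11p + (1 - x) * p01p) := by
      simp only [hz]; ring
    have hih := ih (x * p11p + (1 - x) * p01p) (y * p11p + (1 - y) * p01p) c hc0 hc1
    rw [← hzp] at hih
    apply max_le
    · calc z + m + β * V β m p01p p11p p01a p11a s (z * p11p + (1 - z) * p01p)
          ≤ z + m + β * (c * V β m p01p p11p p01a p11a s (y * p11p + (1 - y) * p01p)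
              + (1 - c) * V β m p01p p11p p01a p11a s (x * p11p + (1 - x) * p01p)) := by
            nlinarith
      _ = c * (y + m + β * V β m p01p p11p p01a p11a s (y * p11p + (1 - y) * p01p))
          + (1 - c) * (x + m + β * V β m p01p p11p p01a p11a s (x * p11p + (1 - x) * p01p)) := by
            simp only [hz]; ring
      _ ≤ _ := add_le_add (mul_le_mul_of_nonneg_left (le_max_left _ _) hc0)
            (mul_le_mul_of_nonneg_left (le_max_left _ _) (by linarith))
    · calc z + β * (z * V β m p01p p11p p01a p11a s p11a
            + (1 - z) * V β m p01p p11p p01a p11a s p01a)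
          = c * (y + β * (y * V β m p01p p11p p01a p11a s p11a
              + (1 - y) * V β m p01p p11p p01a p11a s p01a))
            + (1 - c) * (x + β * (x * V β m p01p p11p p01a p11a s p11a
              + (1 - x) * V β m p01p p11p p01a p11a s p01a)) := by
            simp only [hz]; ring
      _ ≤ _ := add_le_add (mul_le_mul_of_nonneg_left (le_max_right _ _) hc0)
            (mul_le_mul_of_nonneg_left (le_max_right _ _) (by linarith))

theorem index_decay
    (p01p p11p p01a p11a β b : ℝ) (T : ℕ) (mT : ℝ)
    (h1 : 0 ≤ p01p) (h2 : p01p < p11p) (h3 : p11p ≤ 1)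
    (h4 : 0 ≤ p01a) (h5 : p01a < p11a) (h6 : p11a ≤ 1)
    (h7 : p01a > p01p) (h8 : p11a > p11p)
    (hβ0 : 0 < β) (hβ1 : β ≤ 1) (hb0 : 0 ≤ b) (hb1 : b ≤ 1) (hT : 2 ≤ T)
    (hindex : Monotone (fun m : ℝ =>
      Vp β m p01p p11p p01a p11a T b - Va β m p01p p11p p01a p11a T b))
    (hmT : Vp β mT p01p p11p p01a p11a T b = Va β mT p01p p11p p01a p11a T b) :
    mT > β * ((b * p11a + (1 - b) * p01a) - (b * p11p + (1 - b) * p01p)) ∧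
    β * ((b * p11a + (1 - b) * p01a) - (b * p11p + (1 - b) * p01p)) > 0 := by
  set M := β * ((b * p11a + (1 - b) * p01a) - (b * p11p + (1 - b) * p01p)) with hM
  have hd : 0 < (b * p11a + (1 - b) * p01a) - (b * p11p + (1 - b) * p01p) := by
    rcases eq_or_lt_of_le hb0 with hb | hb
    · nlinarith
    · nlinarith [mul_nonneg (by linarith : (0:ℝ) ≤ 1 - b)
        (by linarith : (0:ℝ) ≤ p01a - p01p)]
  have hMpos : 0 < M := mul_pos hβ0 hd
  obtain ⟨t, rfl⟩ : ∃ t, T = t + 2 := ⟨T - 2, by omega⟩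
  have hbpba : b * p11p + (1 - b) * p01p < b * p11a + (1 - b) * p01a := by linarith
  have hstrict := V_strict β M p01p p11p p01a p11a hβ0 h2 h5 t _ _ hbpba
  have hconv := V_convex β M p01p p11p p01a p11a hβ0.le (t + 1) p01a p11a b hb0 hb1
  have hkey : Vp β M p01p p11p p01a p11a (t + 2) b
      < Va β M p01p p11p p01a p11a (t + 2) b := by
    have hsub : t + 2 - 1 = t + 1 := rfl
    simp only [Vp, Va, hsub]
    have h' : β * V β M p01p p11p p01a p11a (t + 1) (b * p11p + (1 - b) * p01p) + M
        < β * V β M p01p p11p p01a p11a (t + 1) (b * p11a + (1 - b) * p01a) := by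
      nlinarith [hstrict]
    have h'' := mul_le_mul_of_nonneg_left hconv hβ0.le
    linarith
  refine ⟨?_, hMpos⟩
  by_contra hle
  push_neg at hle
  have hmono := hindex hle
  simp only at hmono
  rw [hmT, sub_self] at hmono
  linarith
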